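/- Let P and Q be two longest paths in a graph G. Let u be a vertex in V(P) ∩ V(Q). Let v be a vertex in V(P) \ V(Q) such that the subpath P[u,v] of P between u and v is internally disjoint from Q, and let w be a vertex in V(Q) \ V(P) such that the subpath Q[u,w] of Q between u and w is internally disjoint from P. Then there is no path in G from v to w that is internally disjoint from both P and Q. -/

import Mathlib

open SimpleGraph Walk List

section StmtSeven
variable {V : Type*} {G : SimpleGraph V}

variable {V : Type*} {G : SimpleGraph V}

private lemma support_subset_aux {a b : V} {P : G.Walk a b} :
    ∀ {u v : V} (W : G.Walk u v), (∀ e ∈ W.edges, e ∈ P.edges) → u ∈ P.support →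
      ∀ x ∈ W.support, x ∈ P.support := by
  intro u v W
  induction W with
  | nil =>
    intro _ hu x hx
    simp only [Walk.support_nil, List.mem_singleton] at hx
    exact hx ▸ hu
  | @cons u c v h W ih =>
    intro hE hu x hx
    have he : s(u, c) ∈ P.edges := hE _ (by simp)
    have hc : c ∈ P.support := P.snd_mem_support_of_mem_edges he
    rw [Walk.support_cons, List.mem_cons] at hx
    rcases hx with rfl | hx
    · exact hu
    · exact ih (fun e heW => hE e (by simp [heW])) hc x hx

private lemma idx_adj [DecidableEq V] {a b : V} (Q : G.Walk a b) (hQ : Q.IsPath) :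
    ∀ {x y : V}, s(x, y) ∈ Q.edges →
      Q.support.idxOf y = Q.support.idxOf x + 1 ∨
      Q.support.idxOf x = Q.support.idxOf y + 1 := by
  induction Q with
  | nil => intro x y h; simp at h
  | @cons a c b h Q ih =>
    intro x y hxy
    rw [Walk.cons_isPath_iff] at hQ
    obtain ⟨hQ', haQ⟩ := hQ
    rw [Walk.edges_cons, List.mem_cons] at hxy
    rw [Walk.support_cons]
    rcases hxy with heq | hmem
    · have hac : a ≠ c := h.ne
      rw [Sym2.eq_iff] at heq
      have hidxa : (a :: Q.support).idxOf a = 0 := List.idxOf_cons_self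
      have hidxc : (a :: Q.support).idxOf c = 1 := by
        rw [List.idxOf_cons_ne _ hac]
        rw [Q.support_eq_cons, List.idxOf_cons_self]
      rcases heq with ⟨rfl, rfl⟩ | ⟨rfl, rfl⟩
      · left; rw [hidxa, hidxc]
      · right; rw [hidxa, hidxc]
    · have hx : x ∈ Q.support := Q.fst_mem_support_of_mem_edges hmem
      have hy : y ∈ Q.support := Q.snd_mem_support_of_mem_edges hmem
      have hxa : x ≠ a := fun h' => haQ (h' ▸ hx)
      have hya : y ≠ a := fun h' => haQ (h' ▸ hy)
      rw [List.idxOf_cons_ne _ (Ne.symm hxa), List.idxOf_cons_ne _ (Ne.symm hya)]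
      rcases ih hQ' hmem with h' | h'
      · left; omega
      · right; omega

private lemma mono_aux [DecidableEq V] {a b : V} (Q : G.Walk a b) (hQ : Q.IsPath) :
    ∀ {u w : V} (W : G.Walk u w), W.IsPath → (∀ e ∈ W.edges, e ∈ Q.edges) → u ∈ Q.support →
      ((Q.support.idxOf w : ℤ) = Q.support.idxOf u + W.length ∧
        ∀ z ∈ W.support, (Q.support.idxOf u : ℤ) ≤ Q.support.idxOf z) ∨
      ((Q.support.idxOf w : ℤ) = Q.support.idxOf u - W.length ∧
        ∀ z ∈ W.support, (Q.support.idxOf z : ℤ) ≤ Q.support.idxOf u) := by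
  intro u w W
  induction W with
  | nil =>
    intro _ _ _
    left
    constructor
    · simp
    · intro z hz
      simp only [Walk.support_nil, List.mem_singleton] at hz
      simp [hz]
  | @cons u x w hadj W ih =>
    intro hWp hE huQ
    rw [Walk.cons_isPath_iff] at hWp
    obtain ⟨hW', huW'⟩ := hWp
    have he : s(u, x) ∈ Q.edges := hE _ (by simp)
    have hxQ : x ∈ Q.support := Q.snd_mem_support_of_mem_edges he
    have hE' : ∀ e ∈ W.edges, e ∈ Q.edges := fun e heW => hE e (by simp [heW])
    have step := idx_adj Q hQ he
    have IH := ih hW' hE' hxQ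
    rw [Walk.length_cons]
    have hsup : (Walk.cons hadj W).support = u :: W.support := Walk.support_cons _ _
    -- helper for the misaligned cases
    rcases step with hstep | hstep
    · rcases IH with ⟨hlen, hbd⟩ | ⟨hlen, hbd⟩
      · -- aligned increasing
        left
        constructor
        · push_cast; omega
        · intro z hz
          rw [hsup, List.mem_cons] at hz
          rcases hz with rfl | hz
          · exact le_refl _
          · have := hbd z hz; omega
      · -- misaligned: x = u + 1 but W decreasing
        cases W with
        | nil =>
          left
          constructor
          · simp only [Walk.length_nil]
            push_cast
            omega
          · intro z hz
            rw [hsup, List.mem_cons] at hz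
            rcases hz with rfl | hz
            · exact le_refl _
            · simp only [Walk.support_nil, List.mem_singleton] at hz
              subst hz; omega
        | @cons x y w hadj2 W2 =>
          exfalso
          have he2 : s(x, y) ∈ Q.edges := hE' _ (by simp)
          have hyQ : y ∈ Q.support := Q.snd_mem_support_of_mem_edges he2
          have hyW' : y ∈ (Walk.cons hadj2 W2).support := by
            rw [Walk.support_cons]
            exact List.mem_cons_of_mem _ W2.start_mem_support
          have hby := hbd y hyW'
          have step2 := idx_adj Q hQ he2
          have hyu : Q.support.idxOf y = Q.support.idxOf u := by omega
          have : y = u := (List.idxOf_inj hyQ).mp hyu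
          exact huW' (this ▸ hyW')
    · rcases IH with ⟨hlen, hbd⟩ | ⟨hlen, hbd⟩
      · -- misaligned: u = x + 1 but W increasing
        cases W with
        | nil =>
          right
          constructor
          · simp only [Walk.length_nil]
            push_cast
            omega
          · intro z hz
            rw [hsup, List.mem_cons] at hz
            rcases hz with rfl | hz
            · exact le_refl _
            · simp only [Walk.support_nil, List.mem_singleton] at hz
              subst hz; omega
        | @cons x y w hadj2 W2 =>
          exfalso
          have he2 : s(x, y) ∈ Q.edges := hE' _ (by simp)
          have hyQ : y ∈ Q.support := Q.snd_mem_support_of_mem_edges he2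
          have hyW' : y ∈ (Walk.cons hadj2 W2).support := by
            rw [Walk.support_cons]
            exact List.mem_cons_of_mem _ W2.start_mem_support
          have hby := hbd y hyW'
          have step2 := idx_adj Q hQ he2
          have hyu : Q.support.idxOf y = Q.support.idxOf u := by omega
          have : y = u := (List.idxOf_inj hyQ).mp hyu
          exact huW' (this ▸ hyW')
      · -- aligned decreasing
        right
        constructor
        · push_cast; omega
        · intro z hz
          rw [hsup, List.mem_cons] at hz
          rcases hz with rfl | hz
          · exact le_refl _
          · have := hbd z hz; omega

private lemma length_unique {a b u w : V} {Q : G.Walk a b} (hQ : Q.IsPath)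
    (W₁ W₂ : G.Walk u w) (h₁ : W₁.IsPath) (h₂ : W₂.IsPath)
    (e₁ : ∀ e ∈ W₁.edges, e ∈ Q.edges) (e₂ : ∀ e ∈ W₂.edges, e ∈ Q.edges)
    (huQ : u ∈ Q.support) : W₁.length = W₂.length := by
  classical
  rcases mono_aux Q hQ W₁ h₁ e₁ huQ with ⟨hl1, _⟩ | ⟨hl1, _⟩ <;>
    rcases mono_aux Q hQ W₂ h₂ e₂ huQ with ⟨hl2, _⟩ | ⟨hl2, _⟩ <;> omega


variable {V : Type*} {G : SimpleGraph V}

private lemma core_lemma {q₁ q₂ u v w : V} (huw : u ≠ w)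
    (T : G.Walk q₁ u) (M : G.Walk u w) (D2 : G.Walk w q₂)
    (hQ : (T.append (M.append D2)).IsPath)
    (hmax : ∀ (a b : V) (W : G.Walk a b), W.IsPath →
      W.length ≤ (T.append (M.append D2)).length)
    (S : G.Walk u v) (hS : S.IsPath)
    (hSint : ∀ x ∈ S.support, x ≠ u → x ∉ (T.append (M.append D2)).support)
    (R : G.Walk v w) (hR : R.IsPath)
    (hRint : ∀ x ∈ R.support, x ≠ v → x ≠ w → x ∉ (T.append (M.append D2)).support)
    (hRS : ∀ x ∈ R.support, x ≠ v → x ∉ S.support) :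
    S.length + R.length ≤ M.length := by
  set Qw := T.append (M.append D2) with hQw
  have hQsup : Qw.support = T.support ++ (M.support.tail ++ D2.support.tail) := by
    rw [hQw, Walk.support_append, Walk.support_append]
    rw [M.support_eq_cons]
    simp
  have hnodup : Qw.support.Nodup := hQ.support_nodup
  rw [hQsup, List.nodup_append] at hnodup
  obtain ⟨hTnd, hMD2nd, hdisj⟩ := hnodup
  rw [List.nodup_append] at hMD2nd
  obtain ⟨hMtnd, hD2tnd, hdisjMD⟩ := hMD2nd
  -- w is in M.support.tail
  have hwM : w ∈ M.support.tail := by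
    have := M.end_mem_support
    rw [M.support_eq_cons, List.mem_cons] at this
    rcases this with h | h
    · exact absurd h.symm huw
    · exact h
  have hwT : w ∉ T.support := fun hw => hdisj w hw w (List.mem_append_left _ hwM) rfl
  have hwD2t : w ∉ D2.support.tail := fun h => hdisjMD w hwM w h rfl
  -- memberships into Qw.support
  have hTmem : ∀ x ∈ T.support, x ∈ Qw.support := fun x hx => by
    rw [hQsup]; exact List.mem_append_left _ hx
  have hD2mem : ∀ x ∈ D2.support.tail, x ∈ Qw.support := fun x hx => by
    rw [hQsup]; exact List.mem_append_right _ (List.mem_append_right _ hx)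
  -- basic tail facts
  have huS : u ∉ S.support.tail := by
    have := hS.support_nodup
    rw [S.support_eq_cons] at this
    exact (List.nodup_cons.mp this).1
  have hvR : v ∉ R.support.tail := by
    have := hR.support_nodup
    rw [R.support_eq_cons] at this
    exact (List.nodup_cons.mp this).1
  have hStail : ∀ x ∈ S.support.tail, x ∈ S.support := fun x hx => by
    rw [S.support_eq_cons]; exact List.mem_cons_of_mem _ hx
  have hRtail : ∀ x ∈ R.support.tail, x ∈ R.support := fun x hx => by
    rw [R.support_eq_cons]; exact List.mem_cons_of_mem _ hx
  have hSQ : ∀ x ∈ S.support.tail, x ∉ Qw.support := fun x hx =>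
    hSint x (hStail x hx) (fun h => huS (h ▸ hx))
  have hRQ : ∀ x ∈ R.support.tail, x ≠ w → x ∉ Qw.support := fun x hx hxw =>
    hRint x (hRtail x hx) (fun h => hvR (h ▸ hx)) hxw
  -- the new walk
  set W1 := T.append (S.append (R.append D2)) with hW1
  have hW1sup : W1.support =
      T.support ++ (S.support.tail ++ (R.support.tail ++ D2.support.tail)) := by
    rw [hW1, Walk.support_append, Walk.support_append, Walk.support_append]
    rw [S.support_eq_cons, R.support_eq_cons]
    simp
  have hW1path : W1.IsPath := by
    rw [Walk.isPath_def, hW1sup]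
    rw [List.nodup_append, List.nodup_append, List.nodup_append]
    refine ⟨hTnd, ⟨?_, ⟨?_, hD2tnd, ?_⟩, ?_⟩, ?_⟩
    · -- S tail nodup
      have := hS.support_nodup
      rw [S.support_eq_cons] at this
      exact (List.nodup_cons.mp this).2
    · -- R tail nodup
      have := hR.support_nodup
      rw [R.support_eq_cons] at this
      exact (List.nodup_cons.mp this).2
    · -- R.tail disjoint D2.tail
      intro x hxR y hxD hxy; subst hxy
      by_cases hxw : x = w
      · exact hwD2t (hxw ▸ hxD)
      · exact hRQ x hxR hxw (hD2mem x hxD)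
    · -- S.tail disjoint (R.tail ++ D2.tail)
      intro x hxS y hx hxy; subst hxy
      rw [List.mem_append] at hx
      rcases hx with hx | hx
      · -- x in R.tail : use hRS
        have hxv : x ≠ v := fun h => hvR (h ▸ hx)
        exact hRS x (hRtail x hx) hxv (hStail x hxS)
      · exact hSQ x hxS (hD2mem x hx)
    · -- T disjoint rest
      intro x hxT y hx hxy; subst hxy
      rw [List.mem_append, List.mem_append] at hx
      rcases hx with hx | hx | hx
      · exact hSQ x hx (hTmem x hxT)
      · by_cases hxw : x = w
        · exact hwT (hxw ▸ hxT)
        · exact hRQ x hx hxw (hTmem x hxT)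
      · exact hdisj x hxT x (List.mem_append_right _ hx) rfl
  have hlen1 : W1.length = T.length + (S.length + (R.length + D2.length)) := by
    rw [hW1, Walk.length_append, Walk.length_append, Walk.length_append]
  have hlenQ : Qw.length = T.length + (M.length + D2.length) := by
    rw [hQw, Walk.length_append, Walk.length_append]
  have := hmax _ _ W1 hW1path
  omega

private lemma key_lemma {q₁ q₂ u v w : V} {Q : G.Walk q₁ q₂} (hQ : Q.IsPath)
    (hmax : ∀ (a b : V) (W : G.Walk a b), W.IsPath → W.length ≤ Q.length)
    (huQ : u ∈ Q.support) (hvQ : v ∉ Q.support) (hwQ : w ∈ Q.support) (huw : u ≠ w)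
    (Quw : G.Walk u w) (hQuw : Quw.IsPath) (hQuwSub : ∀ e ∈ Quw.edges, e ∈ Q.edges)
    (S : G.Walk u v) (hS : S.IsPath) (hSint : ∀ x ∈ S.support, x ≠ u → x ∉ Q.support)
    (R : G.Walk v w) (hR : R.IsPath)
    (hRint : ∀ x ∈ R.support, x ≠ v → x ≠ w → x ∉ Q.support)
    (hRS : ∀ x ∈ R.support, x ≠ v → x ∉ S.support) :
    S.length + R.length ≤ Quw.length := by
  classical
  set T := Q.takeUntil u huQ with hT
  set D := Q.dropUntil u huQ with hD
  have hsplit : T.append D = Q := Q.take_spec huQ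
  by_cases hwD : w ∈ D.support
  · -- u comes before w along Q
    set M := D.takeUntil w hwD with hM
    set D2 := D.dropUntil w hwD with hD2
    have hMD : M.append D2 = D := D.take_spec hwD
    have hQeq : T.append (M.append D2) = Q := by rw [hMD, hsplit]
    have hMpath : M.IsPath := (hQ.dropUntil huQ).takeUntil hwD
    have hMedges : ∀ e ∈ M.edges, e ∈ Q.edges := fun e he =>
      Q.edges_dropUntil_subset huQ (D.edges_takeUntil_subset hwD he)
    have hML : M.length = Quw.length :=
      length_unique hQ M Quw hMpath hQuw hMedges hQuwSub huQ
    rw [← hML]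
    exact core_lemma huw T M D2 (by rw [hQeq]; exact hQ)
      (fun a b W hW => by rw [hQeq]; exact hmax a b W hW)
      S hS (fun x hx hxu => by rw [hQeq]; exact hSint x hx hxu)
      R hR (fun x hx hxv hxw => by rw [hQeq]; exact hRint x hx hxv hxw) hRS
  · -- w comes before u along Q
    have hwT : w ∈ T.support := by
      have : w ∈ (T.append D).support := by rw [hsplit]; exact hwQ
      rw [Walk.mem_support_append_iff] at this
      exact this.resolve_right hwD
    set T1 := T.takeUntil w hwT with hT1
    set M' := T.dropUntil w hwT with hM'
    have hT1M : T1.append M' = T := T.take_spec hwT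
    have hQeq : (D.reverse).append ((M'.reverse).append (T1.reverse)) = Q.reverse := by
      rw [← hsplit, ← hT1M, Walk.reverse_append, Walk.reverse_append]
    have hM'path : (M'.reverse).IsPath := ((hQ.takeUntil huQ).dropUntil hwT).reverse
    have hM'edges : ∀ e ∈ M'.reverse.edges, e ∈ Q.edges := fun e he => by
      rw [Walk.edges_reverse, List.mem_reverse] at he
      exact Q.edges_takeUntil_subset huQ (T.edges_dropUntil_subset hwT he)
    have hML : M'.reverse.length = Quw.length :=
      length_unique hQ M'.reverse Quw hM'path hQuw hM'edges hQuwSub huQ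
    rw [← hML]
    have hmem : ∀ x : V, x ∈ ((D.reverse).append ((M'.reverse).append (T1.reverse))).support ↔
        x ∈ Q.support := by
      intro x
      rw [hQeq, Walk.support_reverse, List.mem_reverse]
    exact core_lemma huw D.reverse M'.reverse T1.reverse
      (by rw [hQeq]; exact hQ.reverse)
      (fun a b W hW => by
        have := hmax a b W hW
        have hlen : ((D.reverse).append ((M'.reverse).append (T1.reverse))).length
            = Q.length := by rw [hQeq, Walk.length_reverse]
        omega)
      S hS (fun x hx hxu hmem' => hSint x hx hxu ((hmem x).mp hmem'))
      R hR (fun x hx hxv hxw hmem' => hRint x hx hxv hxw ((hmem x).mp hmem')) hRS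


end StmtSeven


/-- Let `P` and `Q` be two longest paths in a graph `G`. Let `u ∈ V(P) ∩ V(Q)`,
let `v ∈ V(P) \ V(Q)` be such that the subpath `P[u,v]` of `P` is internally disjoint from
`Q`, and let `w ∈ V(Q) \ V(P)` be such that the subpath `Q[u,w]` of `Q` is internally
disjoint from `P`. Then there is no path in `G` from `v` to `w` that is internally disjoint
from both `P` and `Q`.

The subpath `P[u,v]` is formalized as a path from `u` to `v` all of whose edges are edges
of `P` (in a path this uniquely determines the subpath between two of its vertices). -/
theorem stmt_7 {V : Type*} {G : SimpleGraph V}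
    {p₁ p₂ q₁ q₂ : V} (P : G.Walk p₁ p₂) (Q : G.Walk q₁ q₂)
    (hP : P.IsPath) (hQ : Q.IsPath)
    (hPmax : ∀ (a b : V) (W : G.Walk a b), W.IsPath → W.length ≤ P.length)
    (hQmax : ∀ (a b : V) (W : G.Walk a b), W.IsPath → W.length ≤ Q.length)
    {u v w : V}
    (huP : u ∈ P.support) (huQ : u ∈ Q.support)
    (hvP : v ∈ P.support) (hvQ : v ∉ Q.support)
    (hwQ : w ∈ Q.support) (hwP : w ∉ P.support)
    (Puv : G.Walk u v) (hPuv : Puv.IsPath) (hPuvSub : ∀ e ∈ Puv.edges, e ∈ P.edges)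
    (hPuvInt : ∀ x ∈ Puv.support, x ≠ u → x ≠ v → x ∉ Q.support)
    (Quw : G.Walk u w) (hQuw : Quw.IsPath) (hQuwSub : ∀ e ∈ Quw.edges, e ∈ Q.edges)
    (hQuwInt : ∀ x ∈ Quw.support, x ≠ u → x ≠ w → x ∉ P.support) :
    ¬ ∃ R : G.Walk v w, R.IsPath ∧
        ∀ x ∈ R.support, x ≠ v → x ≠ w → x ∉ P.support ∧ x ∉ Q.support := by
  rintro ⟨R, hR, hRprop⟩
  have huw : u ≠ w := fun h => hwP (h ▸ huP)
  have huv : u ≠ v := fun h => hvQ (h ▸ huQ)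
  have hvw : v ≠ w := fun h => hvQ (h ▸ hwQ)
  have hPsub : ∀ x ∈ Puv.support, x ∈ P.support := support_subset_aux Puv hPuvSub huP
  have hQsub : ∀ x ∈ Quw.support, x ∈ Q.support := support_subset_aux Quw hQuwSub huQ
  have h1 : Puv.length + R.length ≤ Quw.length := by
    refine key_lemma hQ hQmax huQ hvQ hwQ huw Quw hQuw hQuwSub Puv hPuv ?_ R hR ?_ ?_
    · intro x hx hxu
      by_cases hxv : x = v
      · exact hxv ▸ hvQ
      · exact hPuvInt x hx hxu hxv
    · exact fun x hx hxv hxw => (hRprop x hx hxv hxw).2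
    · intro x hx hxv hmem
      by_cases hxw : x = w
      · exact hwP (hxw ▸ hPsub x hmem)
      · exact (hRprop x hx hxv hxw).1 (hPsub x hmem)
  have h2 : Quw.length + R.reverse.length ≤ Puv.length := by
    refine key_lemma hP hPmax huP hwP hvP huv Puv hPuv hPuvSub Quw hQuw ?_
      R.reverse hR.reverse ?_ ?_
    · intro x hx hxu
      by_cases hxw : x = w
      · exact hxw ▸ hwP
      · exact hQuwInt x hx hxu hxw
    · intro x hx hxw hxv
      rw [Walk.support_reverse, List.mem_reverse] at hx
      exact (hRprop x hx hxv hxw).1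
    · intro x hx hxw hmem
      rw [Walk.support_reverse, List.mem_reverse] at hx
      by_cases hxv : x = v
      · exact hvQ (hxv ▸ hQsub x hmem)
      · exact (hRprop x hx hxv hxw).2 (hQsub x hmem)
  have hrev : R.reverse.length = R.length := R.length_reverse
  have hR0 : R.length = 0 := by omega
  exact hvw (Walk.eq_of_length_eq_zero hR0)
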